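/- Let m > 0 be a real number and let a : ℕ → ℝ satisfy a_j ≥ 0 for all j ≥ 2. Let A be the formal power series 1 − m·X + ∑_{j≥2} a_j·X^j over ℝ. If every coefficient of the inverse power series A⁻¹ is nonnegative, then every coefficient of A⁻¹ is strictly positive. -/

import Mathlib

open Finset

/-- For `m > 0` and `a_j ≥ 0` (`j ≥ 2`), if all coefficients of the inverse of
`A = 1 − m·X + ∑_{j≥2} a_j·X^j ∈ ℝ⟦X⟧` are nonnegative, then they are all strictly
positive. -/
theorem inv_coeff_pos_of_inv_coeff_nonneg (m : ℝ) (hm : 0 < m)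
    (a : ℕ → ℝ) (ha : ∀ j, 2 ≤ j → 0 ≤ a j)
    (A : PowerSeries ℝ)
    (hA : A = PowerSeries.mk (fun j => if j = 0 then 1 else if j = 1 then -m else a j))
    (hnonneg : ∀ n : ℕ, 0 ≤ PowerSeries.coeff n A⁻¹) :
    ∀ n : ℕ, 0 < PowerSeries.coeff n A⁻¹ := by
  set b : ℕ → ℝ := fun n => PowerSeries.coeff n A⁻¹ with hb
  have hbn : ∀ n, 0 ≤ b n := hnonneg
  have cA : ∀ i, PowerSeries.coeff i A
      = if i = 0 then 1 else if i = 1 then -m else a i := by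
    intro i; rw [hA, PowerSeries.coeff_mk]
  have hA0 : PowerSeries.constantCoeff A = 1 := by
    simpa [PowerSeries.coeff_zero_eq_constantCoeff] using cA 0
  have hmul : A * A⁻¹ = 1 := PowerSeries.mul_inv_cancel _ (by rw [hA0]; norm_num)
  have heq : ∀ n, 1 ≤ n →
      ∑ i ∈ range (n + 1), (PowerSeries.coeff i A) * b (n - i) = 0 := by
    intro n hn
    have h := congrArg (PowerSeries.coeff n) hmul
    rw [PowerSeries.coeff_mul, PowerSeries.coeff_one,
      Finset.Nat.sum_antidiagonal_eq_sum_range_succ_mk] at h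
    simpa [Nat.one_le_iff_ne_zero.mp hn] using h
  have b0 : b 0 = 1 := by
    have h := congrArg (PowerSeries.constantCoeff) hmul
    rw [map_mul, hA0, one_mul, map_one] at h
    simpa [hb, PowerSeries.coeff_zero_eq_constantCoeff] using h
  intro n
  by_contra hcon
  have hex : ∃ k, b k = 0 := ⟨n, le_antisymm (not_lt.mp hcon) (hbn n)⟩
  classical
  set N := Nat.find hex with hNdef
  have hNzero : b N = 0 := Nat.find_spec hex
  have hNmin : ∀ k, k < N → b k ≠ 0 := fun k hk => Nat.find_min hex hk
  have hN1 : 1 ≤ N := by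
    rcases Nat.eq_zero_or_pos N with h | h
    · exfalso; rw [h] at hNzero; rw [b0] at hNzero; norm_num at hNzero
    · exact h
  set d := N - 1 with hddef
  have hdN : d + 1 = N := by omega
  have hbd : 0 < b d := lt_of_le_of_ne (hbn d) (Ne.symm (hNmin d (by omega)))
  -- zeros propagate forward
  have hprop : ∀ k, 1 ≤ k → b (k - 1) = 0 → b k = 0 := by
    intro k hk h0
    have hsum := heq k hk
    have hnn : ∀ i ∈ range (k + 1), 0 ≤ (PowerSeries.coeff i A) * b (k - i) := by
      intro i hi
      rcases Nat.lt_or_ge i 2 with h2 | h2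
      · interval_cases i
        · simp [cA]; exact hbn k
        · simp [cA, h0]
      · rw [cA i, if_neg (by omega), if_neg (by omega)]
        exact mul_nonneg (ha i h2) (hbn _)
    have h0' := (Finset.sum_eq_zero_iff_of_nonneg hnn).mp hsum 0 (by simp)
    simpa [cA] using h0'
  have hzero : ∀ k, N ≤ k → b k = 0 := by
    intro k hk
    induction k with
    | zero => omega
    | succ j ih =>
      rcases Nat.lt_or_ge j N with hj | hj
      · have : j + 1 = N := by omega
        rw [this]; exact hNzero
      · have hjz : b j = 0 := ih hj
        exact hprop (j + 1) (by omega) (by simpa using hjz)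
  -- all a k = 0 for k ≥ 2
  have hazero : ∀ k, 2 ≤ k → a k = 0 := by
    intro k hk
    have hsum := heq (d + k) (by omega)
    have hnn : ∀ i ∈ range (d + k + 1), 0 ≤ (PowerSeries.coeff i A) * b (d + k - i) := by
      intro i hi
      rcases Nat.lt_or_ge i k with hik | hik
      · have hz : b (d + k - i) = 0 := hzero _ (by omega)
        simp [hz]
      · rw [cA i, if_neg (by omega), if_neg (by omega)]
        exact mul_nonneg (ha i (by omega)) (hbn _)
    have hterm := (Finset.sum_eq_zero_iff_of_nonneg hnn).mp hsum k
      (by simp)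
    rw [cA k, if_neg (by omega), if_neg (by omega), Nat.add_sub_cancel] at hterm
    rcases mul_eq_zero.mp hterm with h | h
    · exact h
    · exact absurd h (ne_of_gt hbd)
  -- the equation at N now gives a contradiction
  have hsum := heq N hN1
  have hval : ∑ i ∈ range (N + 1), (PowerSeries.coeff i A) * b (N - i) = -m * b d := by
    rw [Finset.sum_eq_single 1]
    · rw [cA 1]; simp [hddef]
    · intro i hi hne
      rcases Nat.lt_or_ge i 2 with h2 | h2
      · interval_cases i
        · simp [cA, hNzero]
        · omega
      · rw [cA i, if_neg (by omega), if_neg (by omega), hazero i h2, zero_mul]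
    · intro h; exfalso; apply h; simp; omega
  rw [hval] at hsum
  have : b d = 0 := by
    have := mul_eq_zero.mp hsum
    rcases this with h | h
    · exfalso; have : m = 0 := by linarith [neg_eq_zero.mp h]
      exact absurd this (ne_of_gt hm)
    · exact h
  exact absurd this (ne_of_gt hbd)
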